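/- Let ℓ : K → !Σ be a labelled precubical set and let Σ' ⊆ Σ carry the induced total order, so that there is a canonical levelwise-injective morphism of precubical sets !Σ' → !Σ. Let L be the pullback of ℓ : K → !Σ along !Σ' → !Σ in the category of precubical sets; concretely, L_n = {x ∈ K_n : ℓ(x) ∈ (!Σ')_n}. Then: (i) L_0 = K_0; (ii) setting M_n := L ∪ K_{≤n} (a sub-precubical set of K), one has M_0 = L, K = ⋃_n M_n, and for every n ≥ 1 the square with top map ⊔_{x ∈ K_n∖L_n} ∂□[n] → M_{n-1} (given by the boundaries of the cubes x), left map the coproduct of the inclusions ∂□[n] ↪ □[n], right map the inclusion M_{n-1} ↪ M_n, and bottom map ⊔_{x ∈ K_n∖L_n} □[n] → M_n, is a pushout square of precubical sets. Hence the inclusion L ↪ K is a relative {∂□[n] ↪ □[n] : n ≥ 1}-cell complex. -/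

import Mathlib

open CategoryTheory CategoryTheory.Limits Opposite

/-!
Statement 4: the pullback `L` of a labelled precubical set `ℓ : K → !Σ` along
`!Σ' → !Σ` (for a subset `Σ' ⊆ Σ` with the induced total order) contains all
vertices of `K`, and `K` is obtained from `L` by attaching cells
`∂□[n] ↪ □[n]` (`n ≥ 1`), through the filtration `M_n = L ∪ K_{≤n}`.

The cube category `□` is encoded as `BoxCat`: objects are the sets
`[n] = {0,1}^n` (given by their dimension), morphisms are the set maps that
are composites of coface maps `δ_i^α = Fin.insertNth i α`.  Precubical sets
are presheaves `BoxCatᵒᵖ ⥤ Type`; `□[n] = yoneda.obj (bx n)`, and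
`K_n = K.obj (op (bx n))`.  The labelling object `!Σ` is the precubical set
`bang Λ` of nondecreasing words over the totally ordered set `Λ`, a morphism
of `□` acting on words by deleting the letters of the non-retained
coordinates (both face maps `∂_i^0 = ∂_i^1` delete the `i`-th letter).
-/

inductive IsBoxMap : ∀ {m n : ℕ}, ((Fin m → Bool) → (Fin n → Bool)) → Prop
  | id (m : ℕ) : IsBoxMap (id : (Fin m → Bool) → (Fin m → Bool))
  | comp {m n : ℕ} (i : Fin (n + 1)) (α : Bool) {f : (Fin m → Bool) → (Fin n → Bool)} :
      IsBoxMap f → IsBoxMap fun ε => i.insertNth α (f ε)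

theorem IsBoxMap.le {m n : ℕ} {f : (Fin m → Bool) → (Fin n → Bool)}
    (h : IsBoxMap f) : m ≤ n := by
  induction h with
  | id => exact le_rfl
  | comp i α h ih => exact ih.trans (Nat.le_succ _)

theorem IsBoxMap.comp' {m n p : ℕ} {f : (Fin m → Bool) → (Fin n → Bool)}
    {g : (Fin n → Bool) → (Fin p → Bool)} (hf : IsBoxMap f) (hg : IsBoxMap g) :
    IsBoxMap (g ∘ f) := by
  induction hg with
  | id => exact hf
  | comp i α h ih => exact ih.comp i α

structure BoxCat where
  dim : ℕ

abbrev bx (n : ℕ) : BoxCat := ⟨n⟩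

instance : Category BoxCat where
  Hom m n := { f : (Fin m.dim → Bool) → (Fin n.dim → Bool) // IsBoxMap f }
  id m := ⟨id, .id m.dim⟩
  comp f g := ⟨g.1 ∘ f.1, f.2.comp' g.2⟩
  id_comp _ := Subtype.ext rfl
  comp_id _ := Subtype.ext rfl
  assoc _ _ _ := Subtype.ext rfl

theorem BoxCat.hom_le {m n : BoxCat} (f : m ⟶ n) : m.dim ≤ n.dim := f.2.le

/-- A representation of a box map `f : {0,1}^m → {0,1}^n` by the strictly
increasing map `σ : Fin m → Fin n` of "retained coordinates". -/
def IsRepr {m n : ℕ} (f : (Fin m → Bool) → (Fin n → Bool)) (σ : Fin m → Fin n) : Prop :=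
  StrictMono σ ∧ (∀ ε k, f ε (σ k) = ε k) ∧
    (∀ j, (∀ k, σ k ≠ j) → ∀ ε ε', f ε j = f ε' j)

theorem IsBoxMap.exists_repr {m n : ℕ} {f : (Fin m → Bool) → (Fin n → Bool)}
    (h : IsBoxMap f) : ∃ σ : Fin m → Fin n, IsRepr f σ := by
  induction h with
  | id =>
    exact ⟨_root_.id, strictMono_id, fun ε k => rfl, fun j hj ε ε' => absurd rfl (hj j)⟩
  | @comp n' i α g hg ih =>
    obtain ⟨σ, hs, he, hc⟩ := ih
    refine ⟨fun k => i.succAbove (σ k), ((Fin.strictMono_succAbove i).comp hs), ?_, ?_⟩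
    · intro ε k
      simp only [Fin.insertNth_apply_succAbove]
      exact he ε k
    · intro j hj ε ε'
      rcases eq_or_ne j i with rfl | hne
      · simp only [Fin.insertNth_apply_same]
      · obtain ⟨j', rfl⟩ := Fin.exists_succAbove_eq hne
        simp only [Fin.insertNth_apply_succAbove]
        exact hc j' (fun k hk => hj k (congrArg i.succAbove hk)) ε ε'

theorem IsRepr.unique {m n : ℕ} {f : (Fin m → Bool) → (Fin n → Bool)}
    {σ τ : Fin m → Fin n} (hσ : IsRepr f σ) (hτ : IsRepr f τ) : σ = τ := by
  obtain ⟨hσ1, hσ2, hσ3⟩ := hσ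
  obtain ⟨hτ1, hτ2, hτ3⟩ := hτ
  have key : ∀ (σ' τ' : Fin m → Fin n), (∀ ε k, f ε (σ' k) = ε k) →
      (∀ j, (∀ k, τ' k ≠ j) → ∀ ε ε', f ε j = f ε' j) →
      Set.range σ' ⊆ Set.range τ' := by
    intro σ' τ' he hc j hj
    obtain ⟨k, rfl⟩ := hj
    by_contra hr
    simp only [Set.mem_range, not_exists] at hr
    have h2 := hc (σ' k) (fun k' h => hr k' h) (fun _ => true) (fun _ => false)
    rw [he, he] at h2
    simp at h2
  exact (StrictMono.range_inj hσ1 hτ1).1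
    (Set.Subset.antisymm (key σ τ hσ2 hτ3) (key τ σ hτ2 hσ3))

/-- The strictly increasing map of retained coordinates of a morphism of `□`. -/
noncomputable def boxSigma {m n : BoxCat} (f : m ⟶ n) : Fin m.dim → Fin n.dim :=
  f.2.exists_repr.choose

theorem boxSigma_isRepr {m n : BoxCat} (f : m ⟶ n) : IsRepr f.1 (boxSigma f) :=
  f.2.exists_repr.choose_spec

theorem boxSigma_strictMono {m n : BoxCat} (f : m ⟶ n) : StrictMono (boxSigma f) :=
  (boxSigma_isRepr f).1

theorem boxSigma_id (m : BoxCat) : boxSigma (𝟙 m) = _root_.id :=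
  (boxSigma_isRepr (𝟙 m)).unique
    ⟨strictMono_id, fun _ _ => rfl, fun j hj _ _ => absurd rfl (hj j)⟩

theorem boxSigma_comp {m n p : BoxCat} (f : m ⟶ n) (g : n ⟶ p) :
    boxSigma (f ≫ g) = boxSigma g ∘ boxSigma f := by
  obtain ⟨hf1, hf2, hf3⟩ := boxSigma_isRepr f
  obtain ⟨hg1, hg2, hg3⟩ := boxSigma_isRepr g
  refine (boxSigma_isRepr (f ≫ g)).unique ⟨hg1.comp hf1, ?_, ?_⟩
  · intro ε k
    show g.1 (f.1 ε) (boxSigma g (boxSigma f k)) = ε k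
    rw [hg2, hf2]
  · intro j hj ε ε'
    show g.1 (f.1 ε) j = g.1 (f.1 ε') j
    by_cases hrg : ∃ k, boxSigma g k = j
    · obtain ⟨k, rfl⟩ := hrg
      rw [hg2, hg2]
      exact hf3 k (fun k' hk' => hj k' (congrArg (boxSigma g) hk')) ε ε'
    · push_neg at hrg
      exact hg3 j hrg _ _

/-- The labelling precubical set `!Σ` of a totally ordered set of labels `Λ`:
`(!Σ)_n` is the set of nondecreasing `n`-tuples of labels, and a morphism
`f : [m] → [n]` of `□` acts by keeping the letters of the `m` coordinates
retained by `f` (so that both face maps `∂_i^0` and `∂_i^1` delete the `i`-th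
letter). -/
noncomputable def bang (Λ : Type) [LinearOrder Λ] : BoxCatᵒᵖ ⥤ Type where
  obj k := { w : Fin (unop k).dim → Λ // Monotone w }
  map {k k'} g := ↾fun w => ⟨w.1 ∘ boxSigma g.unop, w.2.comp (boxSigma_strictMono g.unop).monotone⟩
  map_id k := by
    refine ConcreteCategory.hom_ext _ _ fun w => ?_
    refine Subtype.ext ?_
    show w.1 ∘ boxSigma (𝟙 (unop k)) = w.1
    rw [boxSigma_id]
    rfl
  map_comp {k k' k''} g g' := by
    refine ConcreteCategory.hom_ext _ _ fun w => ?_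
    refine Subtype.ext ?_
    show w.1 ∘ boxSigma (g'.unop ≫ g.unop) = (w.1 ∘ boxSigma g.unop) ∘ boxSigma g'.unop
    rw [boxSigma_comp]
    rfl

/-- The boundary `∂□[n]` of the representable precubical set `□[n]`. -/
def boundaryBox (n : ℕ) : BoxCatᵒᵖ ⥤ Type where
  obj k := { f : unop k ⟶ bx n // (unop k).dim < n }
  map {k k'} g := ↾fun f => ⟨g.unop ≫ f.1, lt_of_le_of_lt (BoxCat.hom_le g.unop) f.2⟩
  map_id k := by refine ConcreteCategory.hom_ext _ _ fun f => ?_; exact Subtype.ext (Category.id_comp f.1)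
  map_comp {k k' k''} g g' := by
    refine ConcreteCategory.hom_ext _ _ fun f => ?_; exact Subtype.ext (Category.assoc g'.unop g.unop f.1)

/-- The inclusion of precubical sets `∂□[n] ⊆ □[n]`. -/
def boundaryIncl (n : ℕ) : boundaryBox n ⟶ yoneda.obj (bx n) where
  app _ := ↾fun f => f.1
  naturality _ _ _ := rfl

variable {Λ : Type} [LinearOrder Λ]

/-- The canonical levelwise-injective morphism `!Σ' → !Σ` induced by a subset
`S = Σ' ⊆ Σ` with the induced total order. -/
def bangIncl (S : Set Λ) : bang (↥S) ⟶ bang Λ where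
  app k := ↾fun w => ⟨fun i => (w.1 i : Λ), fun _ _ h => Subtype.coe_le_coe.2 (w.2 h)⟩
  naturality _ _ _ := rfl

/-- The property, for an `n`-cube `x ∈ K_n` of a labelled precubical set
`ℓ : K → !Σ`, that all letters of the label word `ℓ(x)` lie in the subset `S`,
i.e. that `ℓ(x) ∈ (!Σ')_n`. -/
def labelsIn {K : BoxCatᵒᵖ ⥤ Type} (ℓ : K ⟶ bang Λ) (S : Set Λ)
    {k : BoxCatᵒᵖ} (x : K.obj k) : Prop :=
  ∀ i, (ℓ.app k x).1 i ∈ S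

theorem labelsIn_map {K : BoxCatᵒᵖ ⥤ Type} (ℓ : K ⟶ bang Λ) (S : Set Λ)
    {k k' : BoxCatᵒᵖ} (g : k ⟶ k') (x : K.obj k) (hx : labelsIn ℓ S x) :
    labelsIn ℓ S (K.map g x) := by
  intro i
  have h := types_congr_hom (ℓ.naturality g) x
  simp only [types_comp_apply] at h
  show (ℓ.app k' (K.map g x)).1 i ∈ S
  rw [h]
  exact hx _

/-- The pullback `L` of a labelled precubical set `ℓ : K → !Σ` along `!Σ' → !Σ`:
concretely, `L_n = {x ∈ K_n : ℓ(x) ∈ (!Σ')_n}`. -/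
def labelPullback (K : BoxCatᵒᵖ ⥤ Type) (ℓ : K ⟶ bang Λ) (S : Set Λ) :
    BoxCatᵒᵖ ⥤ Type where
  obj k := { x : K.obj k // labelsIn ℓ S x }
  map {k k'} g := ↾fun x => ⟨K.map g x.1, labelsIn_map ℓ S g x.1 x.2⟩
  map_id k := by refine ConcreteCategory.hom_ext _ _ fun x => ?_; exact Subtype.ext (types_congr_hom (K.map_id k) x.1)
  map_comp {k k' k''} g g' := by
    refine ConcreteCategory.hom_ext _ _ fun x => ?_; exact Subtype.ext (types_congr_hom (K.map_comp g g') x.1)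

/-- The inclusion `L ⊆ K`. -/
def labelPullbackIncl (K : BoxCatᵒᵖ ⥤ Type) (ℓ : K ⟶ bang Λ) (S : Set Λ) :
    labelPullback K ℓ S ⟶ K where
  app _ := ↾fun x => x.1
  naturality _ _ _ := rfl

/-- The labelling `L → !Σ'` of the pullback `L`. -/
def labelPullbackLabel (K : BoxCatᵒᵖ ⥤ Type) (ℓ : K ⟶ bang Λ) (S : Set Λ) :
    labelPullback K ℓ S ⟶ bang (↥S) where
  app k := ↾fun x => ⟨fun i => ⟨(ℓ.app k x.1).1 i, x.2 i⟩,
    fun _ _ h => Subtype.mk_le_mk.2 ((ℓ.app k x.1).2 h)⟩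
  naturality k k' g := by
    refine ConcreteCategory.hom_ext _ _ fun x => ?_
    refine Subtype.ext (funext fun i => Subtype.ext ?_)
    show (ℓ.app k' (K.map g x.1)).1 i = (ℓ.app k x.1).1 (boxSigma g.unop i)
    have h := types_congr_hom (ℓ.naturality g) x.1
    simp only [types_comp_apply] at h
    rw [h]
    rfl

/-- The sub-precubical set `M_n = L ∪ K_{≤n}` of `K`. -/
def unionStage (K : BoxCatᵒᵖ ⥤ Type) (ℓ : K ⟶ bang Λ) (S : Set Λ) (n : ℕ) :
    BoxCatᵒᵖ ⥤ Type where
  obj k := { x : K.obj k // labelsIn ℓ S x ∨ (unop k).dim ≤ n }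
  map {k k'} g := ↾fun x => ⟨K.map g x.1,
    x.2.imp (labelsIn_map ℓ S g x.1) (fun h => le_trans (BoxCat.hom_le g.unop) h)⟩
  map_id k := by refine ConcreteCategory.hom_ext _ _ fun x => ?_; exact Subtype.ext (types_congr_hom (K.map_id k) x.1)
  map_comp {k k' k''} g g' := by
    refine ConcreteCategory.hom_ext _ _ fun x => ?_; exact Subtype.ext (types_congr_hom (K.map_comp g g') x.1)

/-- The inclusion `L ⊆ M_0`. -/
def labelPullbackToStage (K : BoxCatᵒᵖ ⥤ Type) (ℓ : K ⟶ bang Λ) (S : Set Λ) :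
    labelPullback K ℓ S ⟶ unionStage K ℓ S 0 where
  app _ := ↾fun x => ⟨x.1, Or.inl x.2⟩
  naturality _ _ _ := rfl

/-- The inclusion `M_m ⊆ M_n` for `m ≤ n`. -/
def unionStageIncl (K : BoxCatᵒᵖ ⥤ Type) (ℓ : K ⟶ bang Λ) (S : Set Λ)
    {m n : ℕ} (h : m ≤ n) : unionStage K ℓ S m ⟶ unionStage K ℓ S n where
  app _ := ↾fun x => ⟨x.1, x.2.imp _root_.id (fun h' => h'.trans h)⟩
  naturality _ _ _ := rfl

/-- The chain `M_0 ↪ M_1 ↪ ⋯`. -/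
def unionStageChain (K : BoxCatᵒᵖ ⥤ Type) (ℓ : K ⟶ bang Λ) (S : Set Λ) :
    ℕ ⥤ BoxCatᵒᵖ ⥤ Type where
  obj n := unionStage K ℓ S n
  map {m n} g := unionStageIncl K ℓ S (leOfHom g)
  map_id _ := rfl
  map_comp _ _ := rfl

/-- The cocone on the chain `M_0 ↪ M_1 ↪ ⋯` given by the inclusions `M_n ⊆ K`. -/
def unionStageCocone (K : BoxCatᵒᵖ ⥤ Type) (ℓ : K ⟶ bang Λ) (S : Set Λ) :
    Cocone (unionStageChain K ℓ S) where
  pt := K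
  ι := { app := fun n => { app := fun _ => ↾fun x => x.1, naturality := fun _ _ _ => rfl }
         naturality := fun _ _ _ => rfl }

/-- The boundary `∂□[n+1] → M_n` of an `(n+1)`-cube `x ∈ K_{n+1}`. -/
def stageCellBoundary (K : BoxCatᵒᵖ ⥤ Type) (ℓ : K ⟶ bang Λ) (S : Set Λ) (n : ℕ)
    (x : K.obj (op (bx (n + 1)))) : boundaryBox (n + 1) ⟶ unionStage K ℓ S n where
  app k := ↾fun f => ⟨K.map f.1.op x, Or.inr (by have := f.2; omega)⟩
  naturality k k' g := by
    refine ConcreteCategory.hom_ext _ _ fun f => ?_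
    refine Subtype.ext ?_
    show K.map (g.unop ≫ f.1).op x = K.map g (K.map f.1.op x)
    rw [op_comp, K.map_comp]
    rfl

/-- The Yoneda morphism `□[n+1] → M_{n+1}` of an `(n+1)`-cube `x ∈ K_{n+1}`. -/
def stageCellMap (K : BoxCatᵒᵖ ⥤ Type) (ℓ : K ⟶ bang Λ) (S : Set Λ) (n : ℕ)
    (x : K.obj (op (bx (n + 1)))) : yoneda.obj (bx (n + 1)) ⟶ unionStage K ℓ S (n + 1) where
  app k := ↾fun f => ⟨K.map f.op x, Or.inr (BoxCat.hom_le f)⟩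
  naturality k k' g := by
    refine ConcreteCategory.hom_ext _ _ fun f => ?_
    refine Subtype.ext ?_
    show K.map (g.unop ≫ f).op x = K.map g (K.map f.op x)
    rw [op_comp, K.map_comp]
    rfl

/-! ### Auxiliary material -/

theorem boxHom_eq_id {p : ℕ} (f : bx p ⟶ bx p) : f = 𝟙 (bx p) := by
  obtain ⟨σ, hs, he, hc⟩ := f.2.exists_repr
  have hsurj : Function.Surjective σ := Finite.injective_iff_surjective.mp hs.injective
  have hσ : σ = _root_.id :=
    (StrictMono.range_inj hs strictMono_id).1 (hsurj.range_eq.trans Set.range_id.symm)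
  refine Subtype.ext (funext fun ε => funext fun j => ?_)
  have h := he ε j
  rw [hσ] at h
  exact h

theorem opBoxHom_eq_id {p : ℕ} (g : op (bx p) ⟶ op (bx p)) : g = 𝟙 (op (bx p)) := by
  rw [← g.op_unop, boxHom_eq_id g.unop]
  rfl

theorem labelsIn_of_dim_le_zero {K : BoxCatᵒᵖ ⥤ Type} (ℓ : K ⟶ bang Λ) (S : Set Λ)
    {k : BoxCatᵒᵖ} (h : (unop k).dim ≤ 0) (x : K.obj k) : labelsIn ℓ S x :=
  fun i => absurd i.isLt (by omega)

section PushoutAux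

variable (K : BoxCatᵒᵖ ⥤ Type) (ℓ : K ⟶ bang Λ) (S : Set Λ) (n : ℕ)

open Classical in
/-- The function underlying the descent morphism out of `M_{n+1}`. -/
noncomputable def pushDescApp (X : BoxCatᵒᵖ ⥤ Type)
    (inl : unionStage K ℓ S n ⟶ X)
    (r : { x : K.obj (op (bx (n + 1))) // ¬ labelsIn ℓ S x } → (yoneda.obj (bx (n + 1)) ⟶ X))
    (k : BoxCatᵒᵖ) (y : (unionStage K ℓ S (n + 1)).obj k) : X.obj k :=
  if h : labelsIn ℓ S y.1 ∨ (unop k).dim ≤ n then inl.app k ⟨y.1, h⟩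
  else
    have h1 : ¬ labelsIn ℓ S y.1 := fun hl => h (Or.inl hl)
    have hd : (unop k).dim = n + 1 :=
      le_antisymm (y.2.resolve_left h1) (not_le.mp fun hl => h (Or.inr hl))
    have e : k = op (bx (n + 1)) := by rw [← hd]
    _root_.cast (congrArg X.obj e).symm
      ((r ⟨_root_.cast (congrArg K.obj e) y.1, by subst e; exact h1⟩).app
        (op (bx (n + 1))) (𝟙 (bx (n + 1))))

variable {K ℓ S n}

theorem pushDescApp_eq_mem {X : BoxCatᵒᵖ ⥤ Type}
    {inl : unionStage K ℓ S n ⟶ X}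
    {r : { x : K.obj (op (bx (n + 1))) // ¬ labelsIn ℓ S x } → (yoneda.obj (bx (n + 1)) ⟶ X)}
    {k : BoxCatᵒᵖ} (y : (unionStage K ℓ S (n + 1)).obj k)
    (h : labelsIn ℓ S y.1 ∨ (unop k).dim ≤ n) :
    pushDescApp K ℓ S n X inl r k y = inl.app k ⟨y.1, h⟩ := by
  unfold pushDescApp
  exact dif_pos h

theorem pushDescApp_eq_cell {X : BoxCatᵒᵖ ⥤ Type}
    {inl : unionStage K ℓ S n ⟶ X}
    {r : { x : K.obj (op (bx (n + 1))) // ¬ labelsIn ℓ S x } → (yoneda.obj (bx (n + 1)) ⟶ X)}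
    (y : (unionStage K ℓ S (n + 1)).obj (op (bx (n + 1))))
    (h1 : ¬ labelsIn ℓ S y.1) :
    pushDescApp K ℓ S n X inl r (op (bx (n + 1))) y =
      (r ⟨y.1, h1⟩).app (op (bx (n + 1))) (𝟙 (bx (n + 1))) := by
  unfold pushDescApp
  exact dif_neg (fun h => h.elim h1 fun hle => Nat.not_succ_le_self n hle)

variable (K ℓ S n)

/-- The descent morphism out of `M_{n+1}` for the pushout square. -/
noncomputable def pushDesc (X : BoxCatᵒᵖ ⥤ Type)
    (inl : unionStage K ℓ S n ⟶ X)
    (r : { x : K.obj (op (bx (n + 1))) // ¬ labelsIn ℓ S x } → (yoneda.obj (bx (n + 1)) ⟶ X))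
    (hcomp : ∀ x, stageCellBoundary K ℓ S n x.1 ≫ inl = boundaryIncl (n + 1) ≫ r x) :
    unionStage K ℓ S (n + 1) ⟶ X where
  app k := ↾pushDescApp K ℓ S n X inl r k
  naturality := by
    intro k k' g
    refine ConcreteCategory.hom_ext _ _ fun y => ?_
    show pushDescApp K ℓ S n X inl r k' ((unionStage K ℓ S (n + 1)).map g y) =
      X.map g (pushDescApp K ℓ S n X inl r k y)
    by_cases h : labelsIn ℓ S y.1 ∨ (unop k).dim ≤ n
    · have h' : labelsIn ℓ S (K.map g y.1) ∨ (unop k').dim ≤ n :=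
        h.imp (labelsIn_map ℓ S g y.1) (le_trans (BoxCat.hom_le g.unop))
      rw [pushDescApp_eq_mem _ h', pushDescApp_eq_mem _ h]
      exact types_congr_hom (inl.naturality g) ⟨y.1, h⟩
    · have h1 : ¬ labelsIn ℓ S y.1 := fun hl => h (Or.inl hl)
      have hd : (unop k).dim = n + 1 :=
        le_antisymm (y.2.resolve_left h1) (not_le.mp fun hl => h (Or.inr hl))
      obtain ⟨⟨dk⟩⟩ := k
      have hd' : dk = n + 1 := hd
      subst hd'
      rw [pushDescApp_eq_cell y h1]
      by_cases hk' : (unop k').dim ≤ n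
      · have h'' : labelsIn ℓ S (K.map g y.1) ∨ (unop k').dim ≤ n := Or.inr hk'
        rw [pushDescApp_eq_mem _ h'']
        have hb := types_congr_hom (congrArg (fun t => t.app k') (hcomp ⟨y.1, h1⟩))
          (⟨g.unop, by omega⟩ : (boundaryBox (n + 1)).obj k')
        exact hb.trans (types_congr_hom ((r ⟨y.1, h1⟩).naturality g) (𝟙 (bx (n + 1))))
      · have hd'' : (unop k').dim = n + 1 :=
          le_antisymm (BoxCat.hom_le g.unop) (not_le.mp hk')
        obtain ⟨⟨dk'⟩⟩ := k'
        have hd3 : dk' = n + 1 := hd''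
        subst hd3
        have hg : g = 𝟙 (op (bx (n + 1))) := opBoxHom_eq_id g
        subst hg
        rw [CategoryTheory.Functor.map_id, CategoryTheory.Functor.map_id]
        exact pushDescApp_eq_cell y h1

end PushoutAux

/-- The inverse of `labelPullbackToStage`. -/
def stageZeroInv (K : BoxCatᵒᵖ ⥤ Type) (ℓ : K ⟶ bang Λ) (S : Set Λ) :
    unionStage K ℓ S 0 ⟶ labelPullback K ℓ S where
  app k := ↾fun x => ⟨x.1, x.2.elim _root_.id fun h => labelsIn_of_dim_le_zero ℓ S h x.1⟩
  naturality k k' g := by refine ConcreteCategory.hom_ext _ _ fun x => ?_; exact Subtype.ext rfl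

/-- `K` is the union of the `M_n`. -/
noncomputable def unionStageIsColimit (K : BoxCatᵒᵖ ⥤ Type) (ℓ : K ⟶ bang Λ) (S : Set Λ) :
    IsColimit (unionStageCocone K ℓ S) where
  desc s :=
    { app := fun k => ↾fun x => (s.ι.app (unop k).dim).app k ⟨x, Or.inr le_rfl⟩
      naturality := fun k k' g => by
        refine ConcreteCategory.hom_ext _ _ fun x => ?_
        have hle : (unop k').dim ≤ (unop k).dim := BoxCat.hom_le g.unop
        have h1 := types_congr_hom (congrArg (fun t => t.app k') (s.w (homOfLE hle)))
          (⟨K.map g x, Or.inr le_rfl⟩ : (unionStage K ℓ S (unop k').dim).obj k')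
        have h2 := types_congr_hom ((s.ι.app (unop k).dim).naturality g)
          (⟨x, Or.inr le_rfl⟩ : (unionStage K ℓ S (unop k).dim).obj k)
        exact h1.symm.trans h2 }
  fac s j := by
    apply NatTrans.ext; funext k; refine ConcreteCategory.hom_ext _ _ fun y => ?_
    have h1 := types_congr_hom (congrArg (fun t => t.app k)
      (s.w (homOfLE (le_max_left j (unop k).dim))))
      (y : (unionStage K ℓ S j).obj k)
    have h2 := types_congr_hom (congrArg (fun t => t.app k)
      (s.w (homOfLE (le_max_right j (unop k).dim))))
      (⟨y.1, Or.inr le_rfl⟩ : (unionStage K ℓ S (unop k).dim).obj k)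
    exact h2.symm.trans h1
  uniq s m hm := by
    apply NatTrans.ext; funext k; refine ConcreteCategory.hom_ext _ _ fun x => ?_
    exact types_congr_hom (congrArg (fun t => t.app k) (hm (unop k).dim))
      (⟨x, Or.inr le_rfl⟩ : (unionStage K ℓ S (unop k).dim).obj k)

theorem relative_cell_structure_of_label_pullback
    (K : BoxCatᵒᵖ ⥤ Type) (ℓ : K ⟶ bang Λ) (S : Set Λ) :
    -- `L` is the pullback of `ℓ : K → !Σ` along `!Σ' → !Σ`
    IsPullback (labelPullbackIncl K ℓ S) (labelPullbackLabel K ℓ S) ℓ (bangIncl S) ∧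
    -- (i) `L_0 = K_0`
    Function.Bijective ((labelPullbackIncl K ℓ S).app (op (bx 0))) ∧
    -- (ii) `M_0 = L`
    IsIso (labelPullbackToStage K ℓ S) ∧
    -- `K = ⋃_n M_n`
    Nonempty (IsColimit (unionStageCocone K ℓ S)) ∧
    -- for every `n ≥ 1`, attaching the `(n+1)`-cubes of `K ∖ L` to `M_n` gives `M_{n+1}`
    (∀ n : ℕ, IsPushout
      (Sigma.desc fun x : { x : K.obj (op (bx (n + 1))) // ¬ labelsIn ℓ S x } =>
        stageCellBoundary K ℓ S n x.1)
      (Limits.Sigma.map fun _ : { x : K.obj (op (bx (n + 1))) // ¬ labelsIn ℓ S x } =>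
        boundaryIncl (n + 1))
      (unionStageIncl K ℓ S (Nat.le_succ n))
      (Sigma.desc fun x : { x : K.obj (op (bx (n + 1))) // ¬ labelsIn ℓ S x } =>
        stageCellMap K ℓ S n x.1)) := by
  have wsq : CommSq (labelPullbackIncl K ℓ S) (labelPullbackLabel K ℓ S) ℓ (bangIncl S) :=
    ⟨by apply NatTrans.ext; funext k; refine ConcreteCategory.hom_ext _ _ fun x => ?_; exact Subtype.ext rfl⟩
  refine ⟨?_, ?_, ?_, ?_, ?_⟩
  · -- pullback
    refine IsPullback.of_isLimit' wsq (PullbackCone.IsLimit.mk wsq.w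
      (fun s => { app := fun k => ↾fun w => ⟨s.fst.app k w, fun i => ?_⟩,
                  naturality := fun k k' g => ?_ }) ?_ ?_ ?_)
    · have hc : ℓ.app k (s.fst.app k w) = (bangIncl S).app k (s.snd.app k w) :=
        types_congr_hom (congrArg (fun t => t.app k) s.condition) w
      show (ℓ.app k (s.fst.app k w)).1 i ∈ S
      rw [hc]
      exact ((s.snd.app k w).1 i).2
    · refine ConcreteCategory.hom_ext _ _ fun w => ?_
      exact Subtype.ext (types_congr_hom (s.fst.naturality g) w)
    · intro s
      apply NatTrans.ext; funext k; refine ConcreteCategory.hom_ext _ _ fun w => ?_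
      rfl
    · intro s
      apply NatTrans.ext; funext k; refine ConcreteCategory.hom_ext _ _ fun w => ?_
      refine Subtype.ext (funext fun i => Subtype.ext ?_)
      exact congrArg (fun t => t.1 i)
        (types_congr_hom (congrArg (fun t => t.app k) s.condition) w)
    · intro s m hm1 hm2
      apply NatTrans.ext; funext k; refine ConcreteCategory.hom_ext _ _ fun w => ?_
      exact Subtype.ext (types_congr_hom (congrArg (fun t => t.app k) hm1) w)
  · -- bijective in dimension 0
    constructor
    · intro a b hab
      exact Subtype.ext hab
    · intro x
      exact ⟨⟨x, labelsIn_of_dim_le_zero ℓ S le_rfl x⟩, rfl⟩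
  · -- M_0 = L
    refine ⟨⟨stageZeroInv K ℓ S, ?_, ?_⟩⟩
    · apply NatTrans.ext; funext k; refine ConcreteCategory.hom_ext _ _ fun x => ?_; exact Subtype.ext rfl
    · apply NatTrans.ext; funext k; refine ConcreteCategory.hom_ext _ _ fun x => ?_; exact Subtype.ext rfl
  · -- colimit of the filtration
    exact ⟨unionStageIsColimit K ℓ S⟩
  · -- pushout squares
    intro n
    have wpo : CommSq
        (Sigma.desc fun x : { x : K.obj (op (bx (n + 1))) // ¬ labelsIn ℓ S x } =>
          stageCellBoundary K ℓ S n x.1)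
        (Limits.Sigma.map fun _ : { x : K.obj (op (bx (n + 1))) // ¬ labelsIn ℓ S x } =>
          boundaryIncl (n + 1))
        (unionStageIncl K ℓ S (Nat.le_succ n))
        (Sigma.desc fun x : { x : K.obj (op (bx (n + 1))) // ¬ labelsIn ℓ S x } =>
          stageCellMap K ℓ S n x.1) := by
      constructor
      apply Sigma.hom_ext
      intro x
      rw [← Category.assoc, Sigma.ι_desc, ← Category.assoc, ← Sigma.map'_id,
        Sigma.ι_comp_map', Category.assoc, Sigma.ι_desc]
      apply NatTrans.ext; funext k; refine ConcreteCategory.hom_ext _ _ fun f => ?_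
      exact Subtype.ext rfl
    have hcomp : ∀ (s : PushoutCocone
        (Sigma.desc fun x : { x : K.obj (op (bx (n + 1))) // ¬ labelsIn ℓ S x } =>
          stageCellBoundary K ℓ S n x.1)
        (Limits.Sigma.map fun _ : { x : K.obj (op (bx (n + 1))) // ¬ labelsIn ℓ S x } =>
          boundaryIncl (n + 1)))
        (x : { x : K.obj (op (bx (n + 1))) // ¬ labelsIn ℓ S x }),
        stageCellBoundary K ℓ S n x.1 ≫ s.inl =
          boundaryIncl (n + 1) ≫
            (Sigma.ι (fun _ : { x : K.obj (op (bx (n + 1))) // ¬ labelsIn ℓ S x } =>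
              yoneda.obj (bx (n + 1))) x ≫ s.inr) := by
      intro s x
      have hι : Sigma.ι (fun _ : { x : K.obj (op (bx (n + 1))) // ¬ labelsIn ℓ S x } =>
            boundaryBox (n + 1)) x ≫
          (Limits.Sigma.map fun _ : { x : K.obj (op (bx (n + 1))) // ¬ labelsIn ℓ S x } =>
            boundaryIncl (n + 1)) =
          boundaryIncl (n + 1) ≫
            Sigma.ι (fun _ : { x : K.obj (op (bx (n + 1))) // ¬ labelsIn ℓ S x } =>
              yoneda.obj (bx (n + 1))) x := by
        rw [← Sigma.map'_id]
        exact Sigma.ι_comp_map' _ _ _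
      rw [← Sigma.ι_desc
        (fun x : { x : K.obj (op (bx (n + 1))) // ¬ labelsIn ℓ S x } =>
          stageCellBoundary K ℓ S n x.1) x, Category.assoc, s.condition,
        ← Category.assoc, hι, Category.assoc]
    refine IsPushout.of_isColimit' wpo (PushoutCocone.IsColimit.mk wpo.w
      (fun s => pushDesc K ℓ S n s.pt s.inl
        (fun x => Sigma.ι (fun _ : { x : K.obj (op (bx (n + 1))) // ¬ labelsIn ℓ S x } =>
          yoneda.obj (bx (n + 1))) x ≫ s.inr) (hcomp s)) ?_ ?_ ?_)
    · -- fac_left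
      intro s
      apply NatTrans.ext; funext k; refine ConcreteCategory.hom_ext _ _ fun y => ?_
      show pushDescApp K ℓ S n s.pt s.inl
          (fun x => Sigma.ι (fun _ : { x : K.obj (op (bx (n + 1))) // ¬ labelsIn ℓ S x } =>
            yoneda.obj (bx (n + 1))) x ≫ s.inr) k
          ((unionStageIncl K ℓ S (Nat.le_succ n)).app k y) = s.inl.app k y
      exact pushDescApp_eq_mem _ y.2
    · -- fac_right
      intro s
      apply Sigma.hom_ext
      intro x
      rw [← Category.assoc, Sigma.ι_desc]
      apply NatTrans.ext; funext k; refine ConcreteCategory.hom_ext _ _ fun f => ?_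
      show pushDescApp K ℓ S n s.pt s.inl
          (fun x => Sigma.ι (fun _ : { x : K.obj (op (bx (n + 1))) // ¬ labelsIn ℓ S x } =>
            yoneda.obj (bx (n + 1))) x ≫ s.inr) k
          ((stageCellMap K ℓ S n x.1).app k f) =
        (Sigma.ι (fun _ : { x : K.obj (op (bx (n + 1))) // ¬ labelsIn ℓ S x } =>
          yoneda.obj (bx (n + 1))) x ≫ s.inr).app k f
      by_cases hk : (unop k).dim ≤ n
      · rw [pushDescApp_eq_mem _ (Or.inr hk)]
        exact types_congr_hom (congrArg (fun t => t.app k) (hcomp s x))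
          (⟨f, by omega⟩ : (boundaryBox (n + 1)).obj k)
      · have hdk : (unop k).dim = n + 1 := le_antisymm (BoxCat.hom_le f) (not_le.mp hk)
        obtain ⟨⟨dk⟩⟩ := k
        have hdk' : dk = n + 1 := hdk
        subst hdk'
        have hf : f = 𝟙 (bx (n + 1)) := boxHom_eq_id f
        subst hf
        have hx1 : K.map (𝟙 (bx (n + 1))).op x.1 = x.1 := types_congr_hom (K.map_id _) x.1
        rw [pushDescApp_eq_cell _ (fun hl => x.2 (hx1 ▸ hl))]
        exact congrArg
          (fun z : { x : K.obj (op (bx (n + 1))) // ¬ labelsIn ℓ S x } =>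
            (Sigma.ι (fun _ : { x : K.obj (op (bx (n + 1))) // ¬ labelsIn ℓ S x } =>
              yoneda.obj (bx (n + 1))) z ≫ s.inr).app (op (bx (n + 1))) (𝟙 (bx (n + 1))))
          (Subtype.ext hx1)
    · -- uniqueness
      intro s m hm1 hm2
      apply NatTrans.ext; funext k; refine ConcreteCategory.hom_ext _ _ fun y => ?_
      show m.app k y = pushDescApp K ℓ S n s.pt s.inl
        (fun x => Sigma.ι (fun _ : { x : K.obj (op (bx (n + 1))) // ¬ labelsIn ℓ S x } =>
          yoneda.obj (bx (n + 1))) x ≫ s.inr) k y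
      by_cases hy : labelsIn ℓ S y.1 ∨ (unop k).dim ≤ n
      · have hme : m.app k y = s.inl.app k ⟨y.1, hy⟩ :=
          types_congr_hom (congrArg (fun t => t.app k) hm1)
            (⟨y.1, hy⟩ : (unionStage K ℓ S n).obj k)
        exact hme.trans (pushDescApp_eq_mem y hy).symm
      · have h1' : ¬ labelsIn ℓ S y.1 := fun hl => hy (Or.inl hl)
        have hdk : (unop k).dim = n + 1 :=
          le_antisymm (y.2.resolve_left h1') (not_le.mp fun hl => hy (Or.inr hl))
        obtain ⟨⟨dk⟩⟩ := k
        have hdk' : dk = n + 1 := hdk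
        subst hdk'
        have h5 : stageCellMap K ℓ S n y.1 ≫ m =
            Sigma.ι (fun _ : { x : K.obj (op (bx (n + 1))) // ¬ labelsIn ℓ S x } =>
              yoneda.obj (bx (n + 1))) ⟨y.1, h1'⟩ ≫ s.inr := by
          rw [← Sigma.ι_desc
            (fun x : { x : K.obj (op (bx (n + 1))) // ¬ labelsIn ℓ S x } =>
              stageCellMap K ℓ S n x.1) ⟨y.1, h1'⟩, Category.assoc, hm2]
        have h6 : (⟨K.map (𝟙 (bx (n + 1))).op y.1,
            Or.inr (BoxCat.hom_le (𝟙 (bx (n + 1))))⟩ :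
            (unionStage K ℓ S (n + 1)).obj (op (bx (n + 1)))) = y :=
          Subtype.ext (types_congr_hom (K.map_id _) y.1)
        have h7 : m.app (op (bx (n + 1))) y =
            (Sigma.ι (fun _ : { x : K.obj (op (bx (n + 1))) // ¬ labelsIn ℓ S x } =>
              yoneda.obj (bx (n + 1))) ⟨y.1, h1'⟩ ≫ s.inr).app
              (op (bx (n + 1))) (𝟙 (bx (n + 1))) :=
          (congrArg (m.app _) h6).symm.trans
            (types_congr_hom (congrArg (fun t => t.app (op (bx (n + 1)))) h5) (𝟙 (bx (n + 1))))
        exact h7.trans ((pushDescApp_eq_cell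
          (r := fun x => Sigma.ι (fun _ : { x : K.obj (op (bx (n + 1))) // ¬ labelsIn ℓ S x } =>
            yoneda.obj (bx (n + 1))) x ≫ s.inr) y h1').symm)
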